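/- Let G be a finite simple undirected graph with eigenvalues λ_1, …, λ_n and spectral radius ρ = max_i |λ_i|, and let m_k = Σ_{l=1}^n α_l λ_l^k be a spectral moment sequence of G with nonnegative weights α_l. For s, k ∈ ℕ with k ≥ 1, define H = [[m_{2s}, m_{2s+k}],[m_{2s+k}, m_{2s+2k}]], S = [[m_{2s+k}, m_{2s+2k}],[m_{2s+2k}, m_{2s+3k}]], and F = [[m_{2s+k}, m_{2s+3k}],[m_{2s}, m_{2s+2k}]]. If det(H) ≠ 0, then 2·det(H)·ρ^k ≥ |det(F)| + sqrt((det F)^2 − 4·det(H)·det(S)), where sqrt denotes the real square root with the convention sqrt(x) = 0 for x < 0 (as in Lean's Real.sqrt). -/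

import Mathlib

open Matrix Finset

private lemma lag {n : ℕ} (w y : Fin n → ℝ) :
    2 * ((∑ i, w i) * (∑ i, w i * y i ^ 2)) - 2 * (∑ i, w i * y i) ^ 2 =
      ∑ i, ∑ j, w i * w j * (y i - y j) ^ 2 := by
  have expand : ∀ i j : Fin n, w i * w j * (y i - y j) ^ 2 =
      w i * (w j * y j ^ 2) + (w i * y i ^ 2) * w j - 2 * ((w i * y i) * (w j * y j)) := by
    intros; ring
  simp only [expand, Finset.sum_sub_distrib, Finset.sum_add_distrib, ← Finset.mul_sum,
    ← Finset.sum_mul]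
  ring

private lemma final_alg (a b c r : ℝ) (ha : 0 < a) (hr : 0 < r)
    (h2 : 0 ≤ a * r ^ 2 + b * r + c) (h3 : 0 ≤ a * r ^ 2 - b * r + c)
    (h4 : c ≤ a * r ^ 2) :
    |b| + Real.sqrt (b ^ 2 - 4 * (a * c)) ≤ 2 * a * r := by
  have habs : 0 ≤ a * r ^ 2 - |b| * r + c := by
    rcases abs_cases b with ⟨h, _⟩ | ⟨h, _⟩ <;> rw [h] <;> linarith
  have hb : |b| ≤ 2 * a * r := by
    nlinarith [abs_nonneg b, mul_pos ha hr]
  have hsq : b ^ 2 - 4 * (a * c) ≤ (2 * a * r - |b|) ^ 2 := by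
    have hb2 : |b| ^ 2 = b ^ 2 := sq_abs b
    nlinarith [mul_nonneg ha.le habs]
  have h5 : Real.sqrt (b ^ 2 - 4 * (a * c)) ≤ 2 * a * r - |b| := by
    calc Real.sqrt (b ^ 2 - 4 * (a * c)) ≤ Real.sqrt ((2 * a * r - |b|) ^ 2) :=
          Real.sqrt_le_sqrt hsq
      _ = 2 * a * r - |b| := Real.sqrt_sq (by linarith)
  linarith

theorem stmt_4 (n : ℕ) (hn : 1 ≤ n) (G : SimpleGraph (Fin n)) [DecidableRel G.Adj]
    (lam : Fin n → ℝ) (U : Matrix (Fin n) (Fin n) ℝ)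
    (hU : Uᵀ * U = 1)
    (hAU : G.adjMatrix ℝ * U = U * Matrix.diagonal lam)
    (rho : ℝ) (hrho : IsGreatest (Set.range fun l => |lam l|) rho)
    (α : Fin n → ℝ) (hα : ∀ l, 0 ≤ α l)
    (m : ℕ → ℝ) (hm : ∀ k, m k = ∑ l, α l * lam l ^ k)
    (s k : ℕ) (hk : 1 ≤ k)
    (hH : (!![m (2*s), m (2*s+k); m (2*s+k), m (2*s+2*k)]).det ≠ 0) :
    |(!![m (2*s+k), m (2*s+3*k); m (2*s), m (2*s+2*k)]).det| +
      Real.sqrt ((!![m (2*s+k), m (2*s+3*k); m (2*s), m (2*s+2*k)]).det ^ 2 -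
        4 * ((!![m (2*s), m (2*s+k); m (2*s+k), m (2*s+2*k)]).det *
          (!![m (2*s+k), m (2*s+2*k); m (2*s+2*k), m (2*s+3*k)]).det)) ≤
      2 * (!![m (2*s), m (2*s+k); m (2*s+k), m (2*s+2*k)]).det * rho ^ k := by
  have hk0 : k ≠ 0 := by omega
  set β : Fin n → ℝ := fun l => α l * lam l ^ (2*s) with hβdef
  set x : Fin n → ℝ := fun l => lam l ^ k with hxdef
  set r : ℝ := rho ^ k with hrdef
  -- basic positivity facts
  have hβ : ∀ l, 0 ≤ β l := fun l =>
    mul_nonneg (hα l) (by rw [pow_mul]; exact pow_nonneg (sq_nonneg _) s)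
  have hrho0 : 0 ≤ rho := by
    obtain ⟨l0, hl0⟩ := hrho.1
    exact hl0 ▸ abs_nonneg _
  have hxr : ∀ l, |x l| ≤ r := fun l => by
    rw [hxdef, hrdef]
    calc |lam l ^ k| = |lam l| ^ k := abs_pow _ _
      _ ≤ rho ^ k := pow_le_pow_left₀ (abs_nonneg _) (hrho.2 ⟨l, rfl⟩) k
  have hr0 : 0 ≤ r := pow_nonneg hrho0 k
  -- moments
  have hm0 : m (2*s) = ∑ l, β l := hm _
  have hm1 : m (2*s+k) = ∑ l, β l * x l := by
    rw [hm]
    exact Finset.sum_congr rfl fun l _ => by rw [pow_add]; ring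
  have hm2 : m (2*s+2*k) = ∑ l, β l * x l ^ 2 := by
    rw [hm]
    refine Finset.sum_congr rfl fun l _ => ?_
    rw [show 2*s+2*k = 2*s + k*2 by ring, pow_add, pow_mul]
    ring
  have hm3 : m (2*s+3*k) = ∑ l, β l * x l ^ 3 := by
    rw [hm]
    refine Finset.sum_congr rfl fun l _ => ?_
    rw [show 2*s+3*k = 2*s + k*3 by ring, pow_add, pow_mul]
    ring
  simp only [Matrix.det_fin_two_of, hm0, hm1, hm2, hm3] at hH ⊢
  set M0 := ∑ l, β l with hM0
  set M1 := ∑ l, β l * x l with hM1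
  set M2 := ∑ l, β l * x l ^ 2 with hM2
  set M3 := ∑ l, β l * x l ^ 3 with hM3
  -- nonnegativity of a = M0*M2 - M1^2
  have keyI := lag β x
  rw [← hM0, ← hM1, ← hM2] at keyI
  have posI : 0 ≤ ∑ i, ∑ j, β i * β j * (x i - x j) ^ 2 :=
    Finset.sum_nonneg fun i _ => Finset.sum_nonneg fun j _ =>
      mul_nonneg (mul_nonneg (hβ i) (hβ j)) (sq_nonneg _)
  have ha0 : 0 ≤ M0 * M2 - M1 * M1 := by linarith [keyI, posI]
  have hapos : 0 < M0 * M2 - M1 * M1 := lt_of_le_of_ne ha0 (Ne.symm hH)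
  -- quadratic at r : weights β l * (r - x l)
  have wApos : ∀ l, 0 ≤ β l * (r - x l) := fun l =>
    mul_nonneg (hβ l) (sub_nonneg.2 ((le_abs_self _).trans (hxr l)))
  have sA0 : ∑ l, β l * (r - x l) = r * M0 - M1 := by
    rw [hM0, hM1, Finset.mul_sum, ← Finset.sum_sub_distrib]
    exact Finset.sum_congr rfl fun l _ => by ring
  have sA1 : ∑ l, (β l * (r - x l)) * x l = r * M1 - M2 := by
    rw [hM1, hM2, Finset.mul_sum, ← Finset.sum_sub_distrib]
    exact Finset.sum_congr rfl fun l _ => by ring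
  have sA2 : ∑ l, (β l * (r - x l)) * x l ^ 2 = r * M2 - M3 := by
    rw [hM2, hM3, Finset.mul_sum, ← Finset.sum_sub_distrib]
    exact Finset.sum_congr rfl fun l _ => by ring
  have keyA := lag (fun l => β l * (r - x l)) x
  rw [sA0, sA1, sA2] at keyA
  have posA : 0 ≤ ∑ i, ∑ j, (β i * (r - x i)) * (β j * (r - x j)) * (x i - x j) ^ 2 :=
    Finset.sum_nonneg fun i _ => Finset.sum_nonneg fun j _ =>
      mul_nonneg (mul_nonneg (wApos i) (wApos j)) (sq_nonneg _)
  have hq2 : 0 ≤ (M0 * M2 - M1 * M1) * r ^ 2 + (M1 * M2 - M3 * M0) * r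
      + (M1 * M3 - M2 * M2) := by linarith [keyA, posA]
  -- quadratic at -r : weights β l * (r + x l)
  have wBpos : ∀ l, 0 ≤ β l * (r + x l) := fun l =>
    mul_nonneg (hβ l) (by have := neg_le_of_abs_le (hxr l); linarith)
  have sB0 : ∑ l, β l * (r + x l) = r * M0 + M1 := by
    rw [hM0, hM1, Finset.mul_sum, ← Finset.sum_add_distrib]
    exact Finset.sum_congr rfl fun l _ => by ring
  have sB1 : ∑ l, (β l * (r + x l)) * x l = r * M1 + M2 := by
    rw [hM1, hM2, Finset.mul_sum, ← Finset.sum_add_distrib]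
    exact Finset.sum_congr rfl fun l _ => by ring
  have sB2 : ∑ l, (β l * (r + x l)) * x l ^ 2 = r * M2 + M3 := by
    rw [hM2, hM3, Finset.mul_sum, ← Finset.sum_add_distrib]
    exact Finset.sum_congr rfl fun l _ => by ring
  have keyB := lag (fun l => β l * (r + x l)) x
  rw [sB0, sB1, sB2] at keyB
  have posB : 0 ≤ ∑ i, ∑ j, (β i * (r + x i)) * (β j * (r + x j)) * (x i - x j) ^ 2 :=
    Finset.sum_nonneg fun i _ => Finset.sum_nonneg fun j _ =>
      mul_nonneg (mul_nonneg (wBpos i) (wBpos j)) (sq_nonneg _)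
  have hq3 : 0 ≤ (M0 * M2 - M1 * M1) * r ^ 2 - (M1 * M2 - M3 * M0) * r
      + (M1 * M3 - M2 * M2) := by linarith [keyB, posB]
  -- c ≤ a * r^2 : weights β l * x l
  have sC1 : ∑ l, (β l * x l) * x l = M2 := by
    rw [hM2]; exact Finset.sum_congr rfl fun l _ => by ring
  have sC2 : ∑ l, (β l * x l) * x l ^ 2 = M3 := by
    rw [hM3]; exact Finset.sum_congr rfl fun l _ => by ring
  have keyC := lag (fun l => β l * x l) x
  rw [sC1, sC2, ← hM1] at keyC
  -- merge r^2 * (double sum I) - (double sum C) into a single nonneg double sum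
  have merge : r ^ 2 * (∑ i, ∑ j, β i * β j * (x i - x j) ^ 2)
      - ∑ i, ∑ j, (β i * x i) * (β j * x j) * (x i - x j) ^ 2
      = ∑ i, ∑ j, β i * β j * ((r ^ 2 - x i * x j) * (x i - x j) ^ 2) := by
    rw [Finset.mul_sum, ← Finset.sum_sub_distrib]
    refine Finset.sum_congr rfl fun i _ => ?_
    rw [Finset.mul_sum, ← Finset.sum_sub_distrib]
    exact Finset.sum_congr rfl fun j _ => by ring
  have posC : 0 ≤ ∑ i, ∑ j, β i * β j * ((r ^ 2 - x i * x j) * (x i - x j) ^ 2) := by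
    refine Finset.sum_nonneg fun i _ => Finset.sum_nonneg fun j _ => ?_
    refine mul_nonneg (mul_nonneg (hβ i) (hβ j)) (mul_nonneg ?_ (sq_nonneg _))
    have h1 : x i * x j ≤ r * r := by
      calc x i * x j ≤ |x i * x j| := le_abs_self _
        _ = |x i| * |x j| := abs_mul _ _
        _ ≤ r * r := mul_le_mul (hxr i) (hxr j) (abs_nonneg _) hr0
    rw [pow_two]
    linarith
  have hq4 : M1 * M3 - M2 * M2 ≤ (M0 * M2 - M1 * M1) * r ^ 2 := by
    have hcomb : 0 ≤ r ^ 2 * (2 * (M0 * M2) - 2 * M1 ^ 2)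
        - (2 * (M1 * M3) - 2 * M2 ^ 2) := by
      rw [keyI, keyC, merge]
      exact posC
    linarith [hcomb]
  -- positivity of r
  have hrpos : 0 < r := by
    rcases lt_or_eq_of_le hr0 with h | h
    · exact h
    · exfalso
      have hrho00 : rho = 0 := pow_eq_zero_iff hk0 |>.1 h.symm
      have hx0 : ∀ l, x l = 0 := fun l => by
        have h1 : |lam l| ≤ 0 := hrho00 ▸ hrho.2 ⟨l, rfl⟩
        have h2 : lam l = 0 := abs_nonpos_iff.1 h1
        rw [hxdef]; simp only [h2]; exact zero_pow hk0
      have hM10 : M1 = 0 := by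
        rw [hM1]; exact Finset.sum_eq_zero fun l _ => by rw [hx0 l]; ring
      have hM20 : M2 = 0 := by
        rw [hM2]; exact Finset.sum_eq_zero fun l _ => by rw [hx0 l]; ring
      apply hH
      rw [hM10, hM20]; ring
  exact final_alg _ _ _ _ hapos hrpos (by linarith) (by linarith) (by linarith)
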